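/- Let L be the linear network formed by the three sides of the triangle with vertices (-1,0), (1,0), (0,1) in R², with the shortest-path metric along the network. Then there exists a three-point configuration z ⊂ L (one point in the interior of each edge) such that z is a Delaunay clique in itself, but for every additional point u ∈ L \ z, z is not a clique in z ∪ {u} even though some point of z is not a Delaunay neighbour of u in z ∪ {u}; consequently the Baddeley–Møller consistency condition (C1) fails for the Delaunay relation on this network. -/

import Mathlib

open scoped Classical ENNReal
open Set

noncomputable section
set_option maxHeartbeats 4000000

/-- The triangle network: the three sides of the triangle with vertices
(-1,0), (1,0), (0,1) in the plane, realized in ℂ as -1, 1, I. -/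
def Tri : Set ℂ := segment ℝ (-1) 1 ∪ segment ℝ 1 Complex.I ∪ segment ℝ (-1) Complex.I

/-- Shortest-path (geodesic) distance along the network: the infimum of the lengths
(total variations) of continuous paths in the network between the two points. -/
def netDist (x y : Tri) : ℝ≥0∞ :=
  ⨅ γ : Path x y, eVariationOn (fun t : ℝ => ((γ.extend t : Tri) : ℂ)) (Set.Icc 0 1)

/-- the curve of a path, as map ℝ → ℂ -/
def pc {x y : Tri} (γ : Path x y) : ℝ → ℂ := fun t => ((γ.extend t : Tri) : ℂ)

lemma netDist_def (x y : Tri) : netDist x y = ⨅ γ : Path x y, eVariationOn (pc γ) (Icc 0 1) := rfl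

lemma pc_zero {x y : Tri} (γ : Path x y) : pc γ 0 = (x : ℂ) := by simp [pc]
lemma pc_one {x y : Tri} (γ : Path x y) : pc γ 1 = (y : ℂ) := by simp [pc]
lemma pc_mem {x y : Tri} (γ : Path x y) (t : ℝ) : pc γ t ∈ Tri := (γ.extend t).2

lemma eVar_part {F : ℝ → ℂ} {r t : ℝ} (h0 : 0 ≤ r) (hrt : r ≤ t) (ht : t ≤ 1) :
    edist (F 0) (F r) + edist (F r) (F t) + edist (F t) (F 1) ≤ eVariationOn F (Icc 0 1) := by
  have h01 : (0:ℝ) ≤ 1 := by linarith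
  have e1 := eVariationOn.Icc_add_Icc F (a := 0) (b := t) (c := 1) (s := Icc (0:ℝ) 1)
    (le_trans h0 hrt) ht ⟨le_trans h0 hrt, ht⟩
  have e2 := eVariationOn.Icc_add_Icc F (a := 0) (b := r) (c := t) (s := Icc (0:ℝ) 1) h0 hrt
    ⟨h0, le_trans hrt ht⟩
  have i1 : Icc (0:ℝ) 1 ∩ Icc 0 1 = Icc 0 1 := inter_self _
  rw [i1] at e1
  calc edist (F 0) (F r) + edist (F r) (F t) + edist (F t) (F 1)
      ≤ (eVariationOn F (Icc 0 1 ∩ Icc 0 r) + eVariationOn F (Icc 0 1 ∩ Icc r t))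
        + eVariationOn F (Icc 0 1 ∩ Icc t 1) := by
        gcongr
        · exact eVariationOn.edist_le F ⟨⟨le_refl _, h01⟩, le_refl _, h0⟩
            ⟨⟨h0, le_trans hrt ht⟩, h0, le_refl _⟩
        · exact eVariationOn.edist_le F ⟨⟨h0, le_trans hrt ht⟩, le_refl _, hrt⟩
            ⟨⟨le_trans h0 hrt, ht⟩, hrt, le_refl _⟩
        · exact eVariationOn.edist_le F ⟨⟨le_trans h0 hrt, ht⟩, le_refl _, ht⟩
            ⟨⟨h01, le_refl _⟩, ht, le_refl _⟩
    _ = eVariationOn F (Icc 0 1) := by rw [e2, e1]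

lemma edist_le_netDist (x y : Tri) : edist (x:ℂ) (y:ℂ) ≤ netDist x y := by
  refine le_iInf fun γ => ?_
  have := eVar_part (F := pc γ) (r := 0) (t := 0) le_rfl le_rfl zero_le_one
  simp only [pc_zero, pc_one, edist_self, zero_add] at this
  exact this

lemma eVar_cut {F : ℝ → ℂ} {r t : ℝ} (h0 : 0 ≤ r) (hrt : r ≤ t) (ht : t ≤ 1) :
    edist (F 0) (F r) + edist (F r) (F t) + edist (F t) (F 1) ≤ eVariationOn F (Icc 0 1) :=
  eVar_part h0 hrt ht

/-- straight segment path -/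
def segPath (x y : Tri) (h : segment ℝ (x:ℂ) (y:ℂ) ⊆ Tri) : Path x y where
  toFun t := ⟨(x:ℂ) + (t:ℝ) • ((y:ℂ) - x), h (by
    rw [segment_eq_image']
    exact ⟨(t:ℝ), t.2, rfl⟩)⟩
  continuous_toFun := by
    refine Continuous.subtype_mk ?_ _
    fun_prop
  source' := by ext; simp
  target' := by ext; simp

lemma netDist_le_seg {x y : Tri} (h : segment ℝ (x:ℂ) (y:ℂ) ⊆ Tri) :
    netDist x y ≤ edist (x:ℂ) (y:ℂ) := by
  rw [netDist_def]
  refine iInf_le_of_le (segPath x y h) ?_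
  have heq : EqOn (pc (segPath x y h)) (fun t : ℝ => (x:ℂ) + t • ((y:ℂ) - x)) (Icc 0 1) := by
    intro t ht
    simp only [pc]
    rw [Path.extend_apply _ ht]
    rfl
  rw [eVariationOn.eq_of_eqOn heq]
  have hlip : LipschitzWith ‖(y:ℂ) - x‖₊ (fun t : ℝ => (x:ℂ) + t • ((y:ℂ) - x)) := by
    apply LipschitzWith.of_dist_le_mul
    intro a b
    simp only [dist_eq_norm]
    have : (x:ℂ) + a • ((y:ℂ) - x) - ((x:ℂ) + b • ((y:ℂ) - x)) = (a - b) • ((y:ℂ) - x) := by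
      module
    rw [this, norm_smul]
    simp [Real.dist_eq, mul_comm]
  have hcomp := (hlip.lipschitzOnWith (s := univ)).comp_eVariationOn_le
    (g := id) (s := Icc (0:ℝ) 1) (mapsTo_univ _ _)
  have hid : eVariationOn (id : ℝ → ℝ) (Icc 0 1) ≤ ENNReal.ofReal (1 - 0) := by
    have := MonotoneOn.eVariationOn_le (f := (id : ℝ → ℝ)) (s := Icc (0:ℝ) 1)
      (monotoneOn_id) (a := 0) (b := 1) ⟨le_rfl, zero_le_one⟩ ⟨zero_le_one, le_rfl⟩
    simpa [inter_self] using this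
  calc eVariationOn (fun t : ℝ => (x:ℂ) + t • ((y:ℂ) - x)) (Icc 0 1)
      ≤ ‖(y:ℂ) - x‖₊ * eVariationOn (id : ℝ → ℝ) (Icc 0 1) := hcomp
    _ ≤ ‖(y:ℂ) - x‖₊ * ENNReal.ofReal 1 := by gcongr; simpa using hid
    _ = edist (x:ℂ) (y:ℂ) := by
        rw [edist_comm, edist_eq_enorm_sub, enorm_eq_nnnorm]
        simp

lemma netDist_symm (x y : Tri) : netDist x y = netDist y x := by
  have key : ∀ (a b : Tri), netDist b a ≤ netDist a b := by
    intro a b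
    rw [netDist_def, netDist_def]
    refine le_iInf fun γ => ?_
    refine iInf_le_of_le γ.symm ?_
    have heq : EqOn (pc γ.symm) ((pc γ) ∘ (fun t : ℝ => 1 - t)) (Icc 0 1) := by
      intro t ht
      simp only [pc, Function.comp]
      rw [Path.extend_apply _ ht, Path.extend_apply _ (by constructor <;> [linarith [ht.2]; linarith [ht.1]] : (1 - t) ∈ Icc (0:ℝ) 1)]
      simp [Path.symm_apply, unitInterval.symm]
    rw [eVariationOn.eq_of_eqOn heq]
    refine eVariationOn.comp_le_of_antitoneOn _ _
      (fun u hu v hv huv => by show (1:ℝ) - v ≤ 1 - u; linarith) ?_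
    intro u hu
    show (1:ℝ) - u ∈ Icc (0:ℝ) 1
    exact ⟨by linarith [hu.2], by linarith [hu.1]⟩
  exact le_antisymm (key y x) (key x y)

lemma netDist_triangle (x y z : Tri) : netDist x z ≤ netDist x y + netDist y z := by
  have key : ∀ (γ₁ : Path x y) (γ₂ : Path y z),
      netDist x z ≤ eVariationOn (pc γ₁) (Icc 0 1) + eVariationOn (pc γ₂) (Icc 0 1) := by
    intro γ₁ γ₂
    rw [netDist_def]
    refine iInf_le_of_le (γ₁.trans γ₂) ?_
    have hsplit := eVariationOn.Icc_add_Icc (pc (γ₁.trans γ₂)) (a := 0) (b := 1/2) (c := 1)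
      (s := Icc (0:ℝ) 1) (by norm_num) (by norm_num) ⟨by norm_num, by norm_num⟩
    rw [inter_self] at hsplit
    have i1 : Icc (0:ℝ) 1 ∩ Icc 0 (1/2) = Icc 0 (1/2) := by
      rw [Icc_inter_Icc]; norm_num
    have i2 : Icc (0:ℝ) 1 ∩ Icc (1/2) 1 = Icc (1/2) 1 := by
      rw [Icc_inter_Icc]; norm_num
    rw [i1, i2] at hsplit
    rw [← hsplit]
    gcongr
    · have heq : EqOn (pc (γ₁.trans γ₂)) ((pc γ₁) ∘ (fun t : ℝ => 2 * t)) (Icc 0 (1/2)) := by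
        intro t ht
        simp only [pc, Function.comp]
        have ht1 : t ∈ Icc (0:ℝ) 1 := ⟨ht.1, by linarith [ht.2]⟩
        rw [Path.extend_apply _ ht1, Path.extend_apply _
          (⟨by linarith [ht.1], by linarith [ht.2]⟩ : (2 * t) ∈ Icc (0:ℝ) 1)]
        rw [Path.trans_apply]
        simp only
        split_ifs with h
        · rfl
        · exfalso; exact h (by simpa using ht.2)
      rw [eVariationOn.eq_of_eqOn heq]
      refine eVariationOn.comp_le_of_monotoneOn _ _
        (fun u _ v _ huv => by show (2:ℝ) * u ≤ 2 * v; linarith) ?_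
      intro u hu
      show (2:ℝ) * u ∈ Icc (0:ℝ) 1
      exact ⟨by linarith [hu.1], by linarith [hu.2]⟩
    · have heq : EqOn (pc (γ₁.trans γ₂)) ((pc γ₂) ∘ (fun t : ℝ => 2 * t - 1)) (Icc (1/2) 1) := by
        intro t ht
        simp only [pc, Function.comp]
        have ht1 : t ∈ Icc (0:ℝ) 1 := ⟨by linarith [ht.1], ht.2⟩
        rw [Path.extend_apply _ ht1, Path.extend_apply _
          (⟨by linarith [ht.1], by linarith [ht.2]⟩ : (2 * t - 1) ∈ Icc (0:ℝ) 1)]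
        rw [Path.trans_apply]
        split_ifs with h
        · -- t ≤ 1/2 and t ≥ 1/2 so t = 1/2 : both sides are y
          have : t = 1/2 := le_antisymm (by simpa using h) ht.1
          subst this
          norm_num
        · rfl
      rw [eVariationOn.eq_of_eqOn heq]
      refine eVariationOn.comp_le_of_monotoneOn _ _
        (fun u _ v _ huv => by show (2:ℝ) * u - 1 ≤ 2 * v - 1; linarith) ?_
      intro u hu
      show (2:ℝ) * u - 1 ∈ Icc (0:ℝ) 1
      exact ⟨by linarith [hu.1], by linarith [hu.2]⟩
  rw [netDist_def (x := x) (y := y), netDist_def (x := y) (y := z), ENNReal.iInf_add]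
  refine le_iInf fun γ₁ => ?_
  rw [ENNReal.add_iInf]
  exact le_iInf fun γ₂ => key γ₁ γ₂



def TB : Set ℂ := segment ℝ (-1) 1
def TR : Set ℂ := segment ℝ 1 Complex.I
def TL : Set ℂ := segment ℝ (-1) Complex.I

lemma Tri_eq : Tri = TB ∪ TR ∪ TL := rfl

lemma mem_TB {z : ℂ} : z ∈ TB ↔ z.im = 0 ∧ -1 ≤ z.re ∧ z.re ≤ 1 := by
  rw [TB, segment_eq_image]
  constructor
  · rintro ⟨t, ⟨h0, h1⟩, rfl⟩
    refine ⟨by simp, ?_, ?_⟩ <;> simp [Complex.smul_re] <;> nlinarith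
  · rintro ⟨h1, h2, h3⟩
    refine ⟨(z.re + 1)/2, ⟨by linarith, by linarith⟩, ?_⟩
    apply Complex.ext <;> simp [Complex.smul_re, Complex.smul_im, h1] <;> ring

lemma mem_TR {z : ℂ} : z ∈ TR ↔ z.re + z.im = 1 ∧ 0 ≤ z.im ∧ z.im ≤ 1 := by
  rw [TR, segment_eq_image]
  constructor
  · rintro ⟨t, ⟨h0, h1⟩, rfl⟩
    refine ⟨?_, ?_, ?_⟩ <;> simp [Complex.smul_re, Complex.smul_im] <;> nlinarith
  · rintro ⟨h1, h2, h3⟩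
    refine ⟨z.im, ⟨h2, h3⟩, ?_⟩
    apply Complex.ext <;> simp [Complex.smul_re, Complex.smul_im] <;> linarith

lemma mem_TL {z : ℂ} : z ∈ TL ↔ z.im - z.re = 1 ∧ 0 ≤ z.im ∧ z.im ≤ 1 := by
  rw [TL, segment_eq_image]
  constructor
  · rintro ⟨t, ⟨h0, h1⟩, rfl⟩
    refine ⟨?_, ?_, ?_⟩ <;> simp [Complex.smul_re, Complex.smul_im] <;> nlinarith
  · rintro ⟨h1, h2, h3⟩
    refine ⟨z.im, ⟨h2, h3⟩, ?_⟩
    apply Complex.ext <;> simp [Complex.smul_re, Complex.smul_im] <;> linarith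

lemma closed_seg (x y : ℂ) : IsClosed (segment ℝ x y) := by
  rw [segment_eq_image]
  exact (isCompact_Icc.image (by fun_prop)).isClosed

lemma closed_TB : IsClosed TB := closed_seg _ _
lemma closed_TR : IsClosed TR := closed_seg _ _
lemma closed_TL : IsClosed TL := closed_seg _ _

@[simp] lemma mk_re (a b : ℝ) : (⟨a, b⟩ : ℂ).re = a := rfl
@[simp] lemma mk_im (a b : ℝ) : (⟨a, b⟩ : ℂ).im = b := rfl

lemma TB_inter_TR {z : ℂ} (h1 : z ∈ TB) (h2 : z ∈ TR) : z = 1 := by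
  rw [mem_TB] at h1; rw [mem_TR] at h2
  apply Complex.ext <;> simp <;> [skip; exact h1.1] <;> linarith [h1.1, h2.1]

lemma TB_inter_TL {z : ℂ} (h1 : z ∈ TB) (h2 : z ∈ TL) : z = -1 := by
  rw [mem_TB] at h1; rw [mem_TL] at h2
  apply Complex.ext <;> simp <;> [skip; exact h1.1] <;> linarith [h1.1, h2.1]

lemma TR_inter_TL {z : ℂ} (h1 : z ∈ TR) (h2 : z ∈ TL) : z = Complex.I := by
  rw [mem_TR] at h1; rw [mem_TL] at h2
  apply Complex.ext <;> simp <;> linarith [h1.1, h2.1]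

/-- total length of the network -/
def LL : ℝ := 2 + 2 * Real.sqrt 2

lemma s2_pos : (0:ℝ) < Real.sqrt 2 := Real.sqrt_pos.2 (by norm_num)
lemma s2_lt : Real.sqrt 2 < 3/2 := by
  nlinarith [Real.sq_sqrt (by norm_num : (2:ℝ) ≥ 0), Real.sqrt_nonneg 2]
lemma s2_gt : (1:ℝ) < Real.sqrt 2 := by
  nlinarith [Real.sq_sqrt (by norm_num : (2:ℝ) ≥ 0), Real.sqrt_nonneg 2]
lemma s2_sq : Real.sqrt 2 ^ 2 = 2 := Real.sq_sqrt (by norm_num)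

/-- arclength parametrization of the triangle -/
def P (t : ℝ) : ℂ :=
  if t ≤ 2 then ⟨t - 1, 0⟩
  else if t ≤ 2 + Real.sqrt 2 then ⟨1 - (t - 2) / Real.sqrt 2, (t - 2) / Real.sqrt 2⟩
  else ⟨(LL - t) / Real.sqrt 2 - 1, (LL - t) / Real.sqrt 2⟩

lemma P1_def {t : ℝ} (h : t ≤ 2) : P t = ⟨t - 1, 0⟩ := if_pos h

lemma P2_def {t : ℝ} (h1 : 2 ≤ t) (h2 : t ≤ 2 + Real.sqrt 2) :
    P t = ⟨1 - (t - 2) / Real.sqrt 2, (t - 2) / Real.sqrt 2⟩ := by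
  rcases eq_or_lt_of_le h1 with h | h
  · rw [P, if_pos h.symm.le]
    subst h; norm_num
  · rw [P, if_neg (by linarith), if_pos h2]

lemma P3_def {t : ℝ} (h1 : 2 + Real.sqrt 2 ≤ t) (h2 : t ≤ LL) :
    P t = ⟨(LL - t) / Real.sqrt 2 - 1, (LL - t) / Real.sqrt 2⟩ := by
  rcases eq_or_lt_of_le h1 with h | h
  · rw [P, if_neg (by nlinarith [s2_pos]), if_pos h.symm.le]
    rw [← h]
    have h22 : (2 * Real.sqrt 2 - Real.sqrt 2) / Real.sqrt 2 = 1 := by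
      rw [show 2 * Real.sqrt 2 - Real.sqrt 2 = Real.sqrt 2 by ring, div_self (ne_of_gt s2_pos)]
    apply Complex.ext <;> simp [LL, h22]
  · rw [P, if_neg (by nlinarith [s2_pos]), if_neg (by linarith)]

lemma P_mem1 {t : ℝ} (h0 : 0 ≤ t) (h2 : t ≤ 2) : P t ∈ TB := by
  rw [P1_def h2, mem_TB]
  refine ⟨rfl, ?_, ?_⟩ <;> simp <;> linarith

lemma P_mem2 {t : ℝ} (h0 : 2 ≤ t) (h2 : t ≤ 2 + Real.sqrt 2) : P t ∈ TR := by
  rw [P2_def h0 h2, mem_TR]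
  have hs := s2_pos
  refine ⟨by simp, by simp only [mk_im]; exact div_nonneg (by linarith) hs.le, ?_⟩
  simp only [mk_im]
  rw [div_le_one hs]; linarith

lemma P_mem3 {t : ℝ} (h0 : 2 + Real.sqrt 2 ≤ t) (h2 : t ≤ LL) : P t ∈ TL := by
  rw [P3_def h0 h2, mem_TL]
  have hs := s2_pos
  have hLL0 : 0 ≤ LL - t := by linarith
  have hLL : LL - t ≤ Real.sqrt 2 := by simp [LL] at h0 ⊢; linarith
  refine ⟨by simp, by simp only [mk_im]; exact div_nonneg hLL0 hs.le, ?_⟩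
  simp only [mk_im]
  rw [div_le_one hs]; exact hLL

lemma P_mem {t : ℝ} (h0 : 0 ≤ t) (h2 : t ≤ LL) : P t ∈ Tri := by
  rw [Tri_eq]
  rcases le_or_gt t 2 with h | h
  · exact Or.inl (Or.inl (P_mem1 h0 h))
  rcases le_or_gt t (2 + Real.sqrt 2) with h' | h'
  · exact Or.inl (Or.inr (P_mem2 h.le h'))
  · exact Or.inr (P_mem3 h'.le h2)

lemma P_zero : P 0 = -1 := by rw [P1_def (by norm_num)]; apply Complex.ext <;> simp <;> norm_num
lemma P_two : P 2 = 1 := by rw [P1_def le_rfl]; apply Complex.ext <;> simp <;> norm_num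
lemma P_top : P (2 + Real.sqrt 2) = Complex.I := by
  rw [P2_def (by linarith [s2_pos]) le_rfl]
  apply Complex.ext <;> simp <;> (try simp [div_self (ne_of_gt s2_pos)])
lemma P_LL : P LL = -1 := by
  rw [P3_def (by simp [LL]; try linarith [s2_pos]) le_rfl]
  apply Complex.ext <;> simp

/-- chord distance within one piece equals parameter distance -/
lemma dist_P1 {s t : ℝ} (hs : s ≤ 2) (ht : t ≤ 2) : dist (P s) (P t) = |s - t| := by
  rw [P1_def hs, P1_def ht, Complex.dist_eq_re_im]
  simp only [mk_re, mk_im, sub_self, ne_eq]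
  rw [show (s - 1 - (t-1))^2 + (0:ℝ)^2 = (s-t)^2 by ring, Real.sqrt_sq_eq_abs]

lemma dist_P2 {s t : ℝ} (hs1 : 2 ≤ s) (hs2 : s ≤ 2 + Real.sqrt 2)
    (ht1 : 2 ≤ t) (ht2 : t ≤ 2 + Real.sqrt 2) : dist (P s) (P t) = |s - t| := by
  rw [P2_def hs1 hs2, P2_def ht1 ht2, Complex.dist_eq_re_im]
  have hs := s2_pos
  have h2 := s2_sq
  simp only [mk_re, mk_im]
  rw [show (1 - (s - 2) / Real.sqrt 2 - (1 - (t - 2) / Real.sqrt 2)) ^ 2 +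
      ((s - 2) / Real.sqrt 2 - (t - 2) / Real.sqrt 2) ^ 2 = (s - t)^2 by
    field_simp; nlinarith [s2_sq]]
  exact Real.sqrt_sq_eq_abs _

lemma dist_P3 {s t : ℝ} (hs1 : 2 + Real.sqrt 2 ≤ s) (hs2 : s ≤ LL)
    (ht1 : 2 + Real.sqrt 2 ≤ t) (ht2 : t ≤ LL) : dist (P s) (P t) = |s - t| := by
  rw [P3_def hs1 hs2, P3_def ht1 ht2, Complex.dist_eq_re_im]
  have hs := s2_pos
  simp only [mk_re, mk_im]
  rw [show ((LL - s) / Real.sqrt 2 - 1 - ((LL - t) / Real.sqrt 2 - 1)) ^ 2 +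
      ((LL - s) / Real.sqrt 2 - (LL - t) / Real.sqrt 2) ^ 2 = (s - t)^2 by
    field_simp; nlinarith [s2_sq]]
  exact Real.sqrt_sq_eq_abs _

/-- every point of the network is parametrized -/
lemma P_surj {z : ℂ} (hz : z ∈ Tri) : ∃ t, 0 ≤ t ∧ t ≤ LL ∧ P t = z := by
  have hs := s2_pos
  rw [Tri_eq] at hz
  rcases hz with (h | h) | h
  · rw [mem_TB] at h
    exact ⟨z.re + 1, by linarith [h.2.1], by simp [LL]; nlinarith [h.2.2],
      by rw [P1_def (by linarith [h.2.2])]; apply Complex.ext <;> simp [h.1] <;> (try ring)⟩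
  · rw [mem_TR] at h
    refine ⟨2 + Real.sqrt 2 * z.im, by nlinarith [h.2.1], by simp [LL]; nlinarith [h.2.2], ?_⟩
    rw [P2_def (by nlinarith [h.2.1]) (by nlinarith [h.2.2])]
    apply Complex.ext <;> simp only [mk_re, mk_im] <;> field_simp <;> linarith [h.1,
      (by rw [← mul_add, h.1, mul_one] : Real.sqrt 2 * z.re + Real.sqrt 2 * z.im = Real.sqrt 2)]
  · rw [mem_TL] at h
    refine ⟨LL - Real.sqrt 2 * z.im, by simp [LL]; nlinarith [h.2.2], by nlinarith [h.2.1], ?_⟩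
    rw [P3_def (by simp [LL]; nlinarith [h.2.2]) (by nlinarith [h.2.1])]
    apply Complex.ext <;> simp only [mk_re, mk_im] <;> (try field_simp) <;> (try linarith [h.1,
      (by rw [← mul_sub, h.1, mul_one] : Real.sqrt 2 * z.im - Real.sqrt 2 * z.re = Real.sqrt 2)])



lemma pc_cont {x y : Tri} (γ : Path x y) : Continuous (pc γ) :=
  continuous_subtype_val.comp γ.continuous_extend

/-- first hitting of a closed set along a path -/
lemma hit_closed {x y : Tri} (γ : Path x y) {K : Set ℂ} (hK : IsClosed K) {t₁ : ℝ}
    (h0t₁ : 0 ≤ t₁) (hyK : pc γ t₁ ∈ K) (hxK : (x:ℂ) ∉ K) :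
    ∃ t, 0 < t ∧ t ≤ t₁ ∧ pc γ t ∈ K ∧ (∀ s, 0 ≤ s → s < t → pc γ s ∉ K) ∧
      ∀ C : Set ℂ, IsClosed C → (pc γ '' Ico 0 t ⊆ C) → pc γ t ∈ C := by
  set S := {s : ℝ | s ∈ Icc 0 t₁ ∧ pc γ s ∈ K} with hS
  have hSclosed : IsClosed S := by
    have : S = Icc 0 t₁ ∩ (pc γ) ⁻¹' K := rfl
    rw [this]
    exact isClosed_Icc.inter (hK.preimage (pc_cont γ))
  have hSne : S.Nonempty := ⟨t₁, ⟨h0t₁, le_rfl⟩, hyK⟩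
  have hSbdd : BddBelow S := ⟨0, fun s hs => hs.1.1⟩
  set t := sInf S with ht
  have htS : t ∈ S := hSclosed.csInf_mem hSne hSbdd
  have ht0 : 0 < t := by
    rcases lt_or_eq_of_le htS.1.1 with h | h
    · exact h
    · exfalso
      apply hxK
      have : pc γ t ∈ K := htS.2
      rw [← h] at this
      rwa [pc_zero] at this
  have hbefore : ∀ s, 0 ≤ s → s < t → pc γ s ∉ K := by
    intro s hs0 hst hsK
    have : s ∈ S := by
      refine ⟨⟨hs0, le_trans hst.le htS.1.2⟩, hsK⟩
    exact absurd (csInf_le hSbdd this) (not_le.2 hst)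
  refine ⟨t, ht0, htS.1.2, htS.2, hbefore, ?_⟩
  intro C hC hsub
  have h1 : t ∈ closure (Ico (0:ℝ) t) := by
    rw [closure_Ico (ne_of_lt ht0)]
    exact ⟨ht0.le, le_rfl⟩
  have h2 : pc γ t ∈ closure (pc γ '' Ico 0 t) := by
    have := image_closure_subset_closure_image (pc_cont γ) (s := Ico (0:ℝ) t)
    exact this ⟨t, h1, rfl⟩
  exact closure_minimal hsub hC h2

lemma TriP {t : ℝ} (h0 : 0 ≤ t) (h2 : t ≤ LL) : (⟨P t, P_mem h0 h2⟩ : Tri) = ⟨P t, P_mem h0 h2⟩ := rfl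

lemma edist_P1 {s t : ℝ} (hs : s ≤ 2) (ht : t ≤ 2) :
    edist (P s) (P t) = ENNReal.ofReal |s - t| := by
  rw [edist_dist, dist_P1 hs ht]

lemma edist_P2 {s t : ℝ} (hs1 : 2 ≤ s) (hs2 : s ≤ 2 + Real.sqrt 2)
    (ht1 : 2 ≤ t) (ht2 : t ≤ 2 + Real.sqrt 2) : edist (P s) (P t) = ENNReal.ofReal |s - t| := by
  rw [edist_dist, dist_P2 hs1 hs2 ht1 ht2]

lemma edist_P3 {s t : ℝ} (hs1 : 2 + Real.sqrt 2 ≤ s) (hs2 : s ≤ LL)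
    (ht1 : 2 + Real.sqrt 2 ≤ t) (ht2 : t ≤ LL) : edist (P s) (P t) = ENNReal.ofReal |s - t| := by
  rw [edist_dist, dist_P3 hs1 hs2 ht1 ht2]

/-- upper bound within one piece (chord) -/
lemma netDist_le_piece {s t : ℝ} {x y : Tri} (hx : (x:ℂ) = P s) (hy : (y:ℂ) = P t)
    (hpiece : (0 ≤ s ∧ s ≤ 2 ∧ 0 ≤ t ∧ t ≤ 2) ∨
      (2 ≤ s ∧ s ≤ 2 + Real.sqrt 2 ∧ 2 ≤ t ∧ t ≤ 2 + Real.sqrt 2) ∨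
      (2 + Real.sqrt 2 ≤ s ∧ s ≤ LL ∧ 2 + Real.sqrt 2 ≤ t ∧ t ≤ LL)) :
    netDist x y ≤ ENNReal.ofReal |s - t| := by
  have hseg : segment ℝ (x:ℂ) (y:ℂ) ⊆ Tri := by
    rcases hpiece with ⟨h1,h2,h3,h4⟩ | ⟨h1,h2,h3,h4⟩ | ⟨h1,h2,h3,h4⟩
    · refine subset_trans ?_ (subset_trans (subset_union_left) subset_union_left : TB ⊆ Tri)
      rw [hx, hy]
      exact (convex_segment _ _).segment_subset (P_mem1 h1 h2) (P_mem1 h3 h4)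
    · refine subset_trans ?_ (subset_trans (subset_union_right) subset_union_left : TR ⊆ Tri)
      rw [hx, hy]
      exact (convex_segment _ _).segment_subset (P_mem2 h1 h2) (P_mem2 h3 h4)
    · refine subset_trans ?_ (subset_union_right : TL ⊆ Tri)
      rw [hx, hy]
      exact (convex_segment _ _).segment_subset (P_mem3 h1 h2) (P_mem3 h3 h4)
  refine le_trans (netDist_le_seg hseg) ?_
  rw [hx, hy]
  rcases hpiece with ⟨h1,h2,h3,h4⟩ | ⟨h1,h2,h3,h4⟩ | ⟨h1,h2,h3,h4⟩
  · rw [edist_P1 h2 h4]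
  · rw [edist_P2 h1 h2 h3 h4]
  · rw [edist_P3 h1 h2 h3 h4]


lemma eVar_two {F : ℝ → ℂ} {r : ℝ} (h0 : 0 ≤ r) (h1 : r ≤ 1) :
    edist (F 0) (F r) + edist (F r) (F 1) ≤ eVariationOn F (Icc 0 1) := by
  have := eVar_part (F := F) (r := r) (t := r) h0 le_rfl h1
  simpa using this

lemma P1_not_TR {s : ℝ} (h : s < 2) : P s ∉ TR := by
  rw [P1_def h.le, mem_TR]
  rintro ⟨h1, -⟩
  simp at h1
  linarith

lemma P1_not_TL {s : ℝ} (h : 0 < s) (h2 : s ≤ 2) : P s ∉ TL := by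
  rw [P1_def h2, mem_TL]
  rintro ⟨h1, -⟩
  simp at h1
  linarith

lemma P2_not_TB {s : ℝ} (h : 2 < s) (h2 : s ≤ 2 + Real.sqrt 2) : P s ∉ TB := by
  rw [P2_def h.le h2, mem_TB]
  rintro ⟨h1, -⟩
  simp only [mk_im] at h1
  have hs := s2_pos
  have h3 : s - 2 = 0 := by
    rwa [div_eq_zero_iff, or_iff_left (ne_of_gt hs)] at h1
  linarith

lemma P2_not_TL {s : ℝ} (h1 : 2 ≤ s) (h : s < 2 + Real.sqrt 2) : P s ∉ TL := by
  rw [P2_def h1 h.le, mem_TL]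
  rintro ⟨he, -⟩
  simp only [mk_re, mk_im] at he
  have hs := s2_pos
  have : (s - 2) / Real.sqrt 2 < 1 := by rw [div_lt_one hs]; linarith
  linarith

lemma I_mem_TL : Complex.I ∈ TL := by rw [mem_TL]; simp
lemma I_mem_TR : Complex.I ∈ TR := by rw [mem_TR]; simp
lemma one_mem_TB : (1:ℂ) ∈ TB := by rw [mem_TB]; simp
lemma negone_mem_TB : (-1:ℂ) ∈ TB := by rw [mem_TB]; simp

lemma notTR_mem {z : ℂ} (hz : z ∈ Tri) (h : z ∉ TR) : z ∈ TB ∪ TL := by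
  rw [Tri_eq] at hz
  rcases hz with (h1 | h1) | h1
  · exact Or.inl h1
  · exact absurd h1 h
  · exact Or.inr h1

lemma notTL_mem {z : ℂ} (hz : z ∈ Tri) (h : z ∉ TL) : z ∈ TB ∪ TR := by
  rw [Tri_eq] at hz
  rcases hz with (h1 | h1) | h1
  · exact Or.inl h1
  · exact Or.inr h1
  · exact absurd h1 h

lemma netDist_P_ge {s t : ℝ} {x y : Tri} (hx : (x:ℂ) = P s) (hy : (y:ℂ) = P t)
    (h0 : 0 ≤ s) (hst : s ≤ t) (htL : t ≤ LL) :
    ENNReal.ofReal (min (t - s) (s + (LL - t))) ≤ netDist x y := by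
  have hsp := s2_pos
  have hLL : LL = 2 + 2 * Real.sqrt 2 := rfl
  refine le_iInf fun γ => ?_
  have hF0 : pc γ 0 = P s := by rw [pc_zero, hx]
  have hF1 : pc γ 1 = P t := by rw [pc_one, hy]
  -- shorthand for finishing off a two-term bound
  have fin2 : ∀ (r : ℝ) (a b : ℝ), 0 ≤ r → r ≤ 1 → 0 ≤ a → 0 ≤ b →
      edist (pc γ 0) (pc γ r) = ENNReal.ofReal a →
      edist (pc γ r) (pc γ 1) = ENNReal.ofReal b →
      min (t - s) (s + (LL - t)) ≤ a + b →
      ENNReal.ofReal (min (t - s) (s + (LL - t))) ≤ eVariationOn (pc γ) (Icc 0 1) := by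
    intro r a b hr0 hr1 ha hb hA hB hmin
    calc ENNReal.ofReal (min (t - s) (s + (LL - t)))
        ≤ ENNReal.ofReal (a + b) := ENNReal.ofReal_le_ofReal hmin
      _ = ENNReal.ofReal a + ENNReal.ofReal b := ENNReal.ofReal_add ha hb
      _ = edist (pc γ 0) (pc γ r) + edist (pc γ r) (pc γ 1) := by rw [hA, hB]
      _ ≤ _ := eVar_two hr0 hr1
  have fin3 : ∀ (r u : ℝ) (a b c : ℝ), 0 ≤ r → r ≤ u → u ≤ 1 → 0 ≤ a → 0 ≤ b → 0 ≤ c →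
      edist (pc γ 0) (pc γ r) = ENNReal.ofReal a →
      edist (pc γ r) (pc γ u) = ENNReal.ofReal b →
      edist (pc γ u) (pc γ 1) = ENNReal.ofReal c →
      min (t - s) (s + (LL - t)) ≤ a + b + c →
      ENNReal.ofReal (min (t - s) (s + (LL - t))) ≤ eVariationOn (pc γ) (Icc 0 1) := by
    intro r u a b c hr0 hru hu1 ha hb hc hA hB hC hmin
    calc ENNReal.ofReal (min (t - s) (s + (LL - t)))
        ≤ ENNReal.ofReal (a + b + c) := ENNReal.ofReal_le_ofReal hmin
      _ = ENNReal.ofReal (a + b) + ENNReal.ofReal c :=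
          ENNReal.ofReal_add (by linarith) hc
      _ = ENNReal.ofReal a + ENNReal.ofReal b + ENNReal.ofReal c := by
          rw [ENNReal.ofReal_add ha hb]
      _ = edist (pc γ 0) (pc γ r) + edist (pc γ r) (pc γ u) + edist (pc γ u) (pc γ 1) := by
          rw [hA, hB, hC]
      _ ≤ _ := eVar_part hr0 hru hu1
  by_cases ht2 : t ≤ 2
  · -- both on bottom
    refine fin2 1 (t - s) 0 zero_le_one le_rfl (by linarith) le_rfl ?_ (by simp)
      (le_trans (min_le_left _ _) (by linarith))
    rw [hF0, hF1, edist_P1 (by linarith) ht2]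
    congr 1
    rw [abs_sub_comm, abs_of_nonneg (by linarith)]
  · push_neg at ht2
    by_cases ht3 : t ≤ 2 + Real.sqrt 2
    · -- y on right edge
      by_cases hs2 : 2 ≤ s
      · -- both on right edge
        refine fin2 1 (t - s) 0 zero_le_one le_rfl (by linarith) le_rfl ?_ (by simp)
          (le_trans (min_le_left _ _) (by linarith))
        rw [hF0, hF1, edist_P2 hs2 (by linarith) ht2.le ht3]
        congr 1
        rw [abs_sub_comm, abs_of_nonneg (by linarith)]
      · -- x on bottom (s < 2), y on right
        push_neg at hs2
        have hxTR : (x:ℂ) ∉ TR := by rw [hx]; exact P1_not_TR hs2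
        have hyTR : pc γ 1 ∈ TR := by rw [hF1]; exact P_mem2 ht2.le ht3
        obtain ⟨t₀, ht₀0, ht₀1, ht₀K, hbef, hclos⟩ :=
          hit_closed γ closed_TR zero_le_one hyTR hxTR
        have hent : pc γ t₀ ∈ TB ∪ TL := by
          refine hclos _ (closed_TB.union closed_TL) ?_
          rintro _ ⟨s', hs', rfl⟩
          exact notTR_mem (pc_mem γ s') (hbef s' hs'.1 hs'.2)
        rcases hent with hent | hent
        · -- entry at 1
          have hv : pc γ t₀ = 1 := TB_inter_TR hent ht₀K
          refine fin2 t₀ (2 - s) (t - 2) ht₀0.le ht₀1 (by linarith) (by linarith) ?_ ?_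
            (le_trans (min_le_left _ _) (by linarith))
          · rw [hF0, hv, ← P_two, edist_P1 hs2.le le_rfl]
            congr 1
            rw [abs_sub_comm, abs_of_nonneg (by linarith)]
          · rw [hF1, hv, ← P_two, edist_P2 le_rfl (by linarith) ht2.le ht3]
            congr 1
            rw [abs_sub_comm, abs_of_nonneg (by linarith)]
        · -- entry at I
          have hv : pc γ t₀ = Complex.I := TR_inter_TL ht₀K hent
          rcases eq_or_lt_of_le h0 with hs0 | hs0
          · -- s = 0 : direct two-term bound via I
            refine fin2 t₀ (Real.sqrt 2) (2 + Real.sqrt 2 - t) ht₀0.le ht₀1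
              (by linarith) (by linarith) ?_ ?_
              (le_trans (min_le_right _ _) (by rw [hLL]; linarith))
            · rw [hF0, hv, ← hs0, P_zero, ← P_LL, ← P_top,
                edist_P3 (by rw [hLL]; linarith) le_rfl le_rfl (by rw [hLL]; linarith)]
              congr 1
              rw [abs_of_nonneg (by rw [hLL]; linarith)]
              rw [hLL]; ring
            · rw [hF1, hv, ← P_top, edist_P2 (by linarith) le_rfl ht2.le ht3]
              congr 1
              rw [abs_of_nonneg (by linarith)]
          · -- s > 0 : must have passed through -1 before
            have hxTL : (x:ℂ) ∉ TL := by rw [hx]; exact P1_not_TL hs0 (by linarith)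
            have hIK : pc γ t₀ ∈ TL := by rw [hv]; exact I_mem_TL
            obtain ⟨r, hr0, hrt₀, hrK, hbef', hclos'⟩ :=
              hit_closed γ closed_TL ht₀0.le hIK hxTL
            have hrB : pc γ r ∈ TB := by
              refine hclos' _ closed_TB ?_
              rintro _ ⟨s', hs', rfl⟩
              have h1 : pc γ s' ∉ TL := hbef' s' hs'.1 hs'.2
              have h2 : pc γ s' ∉ TR := hbef s' hs'.1 (lt_of_lt_of_le hs'.2 hrt₀)
              rcases notTL_mem (pc_mem γ s') h1 with h | h
              · exact h
              · exact absurd h h2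
            have hvr : pc γ r = -1 := TB_inter_TL hrB hrK
            refine fin3 r t₀ s (Real.sqrt 2) (2 + Real.sqrt 2 - t) hr0.le hrt₀ ht₀1
              h0 (by linarith) (by linarith) ?_ ?_ ?_
              (le_trans (min_le_right _ _) (by rw [hLL]; linarith))
            · rw [hF0, hvr, ← P_zero, edist_P1 (by linarith) (by norm_num)]
              congr 1
              rw [abs_of_nonneg (by linarith)]
              ring
            · rw [hvr, hv, ← P_LL, ← P_top,
                edist_P3 (by rw [hLL]; linarith) le_rfl le_rfl (by rw [hLL]; linarith)]
              congr 1
              rw [abs_of_nonneg (by rw [hLL]; linarith)]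
              rw [hLL]; ring
            · rw [hF1, hv, ← P_top, edist_P2 (by linarith) le_rfl ht2.le ht3]
              congr 1
              rw [abs_of_nonneg (by linarith)]
    · -- y on left edge (t > 2 + √2)
      push_neg at ht3
      by_cases hs3 : 2 + Real.sqrt 2 ≤ s
      · -- both on left edge
        refine fin2 1 (t - s) 0 zero_le_one le_rfl (by linarith) le_rfl ?_ (by simp)
          (le_trans (min_le_left _ _) (by linarith))
        rw [hF0, hF1, edist_P3 hs3 (by linarith) ht3.le htL]
        congr 1
        rw [abs_sub_comm, abs_of_nonneg (by linarith)]
      · push_neg at hs3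
        rcases eq_or_lt_of_le h0 with hs0 | hs0
        · -- s = 0: x = -1 on left edge too
          refine fin2 1 (LL - t) 0 zero_le_one le_rfl (by linarith) le_rfl ?_ (by simp)
            (le_trans (min_le_right _ _) (by rw [← hs0]; linarith))
          rw [hF0, hF1, ← hs0, P_zero, ← P_LL, edist_P3 (by rw [hLL]; linarith) le_rfl ht3.le htL]
          congr 1
          rw [abs_of_nonneg (by linarith)]
        · -- 0 < s < 2 + √2
          have hyTL : pc γ 1 ∈ TL := by rw [hF1]; exact P_mem3 ht3.le htL
          have hxTL : (x:ℂ) ∉ TL := by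
            rw [hx]
            rcases le_or_gt s 2 with h | h
            · exact P1_not_TL hs0 h
            · exact P2_not_TL h.le hs3
          obtain ⟨t₀, ht₀0, ht₀1, ht₀K, hbef, hclos⟩ :=
            hit_closed γ closed_TL zero_le_one hyTL hxTL
          have hent : pc γ t₀ ∈ TB ∪ TR := by
            refine hclos _ (closed_TB.union closed_TR) ?_
            rintro _ ⟨s', hs', rfl⟩
            exact notTL_mem (pc_mem γ s') (hbef s' hs'.1 hs'.2)
          rcases hent with hent | hent
          · -- entry at -1
            have hv : pc γ t₀ = -1 := TB_inter_TL hent ht₀K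
            rcases le_or_gt s 2 with hs2 | hs2
            · -- x on bottom : two-term
              refine fin2 t₀ s (LL - t) ht₀0.le ht₀1 h0 (by linarith) ?_ ?_
                (le_trans (min_le_right _ _) (by linarith))
              · rw [hF0, hv, ← P_zero, edist_P1 hs2 (by norm_num)]
                congr 1
                rw [abs_of_nonneg (by linarith)]
                ring
              · rw [hF1, hv, ← P_LL, edist_P3 (by rw [hLL]; linarith) le_rfl ht3.le htL]
                congr 1
                rw [abs_of_nonneg (by linarith)]
            · -- x on right edge : must pass through 1 first
              have hxTB : (x:ℂ) ∉ TB := by rw [hx]; exact P2_not_TB hs2 hs3.le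
              have hmK : pc γ t₀ ∈ TB := by rw [hv]; exact negone_mem_TB
              obtain ⟨r, hr0, hrt₀, hrK, hbef', hclos'⟩ :=
                hit_closed γ closed_TB ht₀0.le hmK hxTB
              have hrR : pc γ r ∈ TR := by
                refine hclos' _ closed_TR ?_
                rintro _ ⟨s', hs', rfl⟩
                have h1 : pc γ s' ∉ TB := hbef' s' hs'.1 hs'.2
                have h2 : pc γ s' ∉ TL := hbef s' hs'.1 (lt_of_lt_of_le hs'.2 hrt₀)
                rcases notTL_mem (pc_mem γ s') h2 with h | h
                · exact absurd h h1
                · exact h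
              have hvr : pc γ r = 1 := TB_inter_TR hrK hrR
              refine fin3 r t₀ (s - 2) 2 (LL - t) hr0.le hrt₀ ht₀1
                (by linarith) (by norm_num) (by linarith) ?_ ?_ ?_
                (le_trans (min_le_right _ _) (by linarith))
              · rw [hF0, hvr, ← P_two, edist_P2 hs2.le hs3.le le_rfl (by linarith)]
                congr 1
                rw [abs_of_nonneg (by linarith)]
              · rw [hvr, hv, ← P_zero, ← P_two, edist_P1 le_rfl (by norm_num)]
                congr 1
                rw [abs_of_nonneg (by norm_num)]
                norm_num
              · rw [hF1, hv, ← P_LL, edist_P3 (by rw [hLL]; linarith) le_rfl ht3.le htL]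
                congr 1
                rw [abs_of_nonneg (by linarith)]
          · -- entry at I
            have hv : pc γ t₀ = Complex.I := TR_inter_TL hent ht₀K
            rcases lt_or_ge s 2 with hs2 | hs2
            · -- x on bottom : must pass through 1 first
              have hxTR : (x:ℂ) ∉ TR := by rw [hx]; exact P1_not_TR hs2
              have hmK : pc γ t₀ ∈ TR := by rw [hv]; exact I_mem_TR
              obtain ⟨r, hr0, hrt₀, hrK, hbef', hclos'⟩ :=
                hit_closed γ closed_TR ht₀0.le hmK hxTR
              have hrB : pc γ r ∈ TB := by
                refine hclos' _ closed_TB ?_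
                rintro _ ⟨s', hs', rfl⟩
                have h1 : pc γ s' ∉ TR := hbef' s' hs'.1 hs'.2
                have h2 : pc γ s' ∉ TL := hbef s' hs'.1 (lt_of_lt_of_le hs'.2 hrt₀)
                rcases notTL_mem (pc_mem γ s') h2 with h | h
                · exact h
                · exact absurd h h1
              have hvr : pc γ r = 1 := TB_inter_TR hrB hrK
              refine fin3 r t₀ (2 - s) (Real.sqrt 2) (t - (2 + Real.sqrt 2)) hr0.le hrt₀ ht₀1
                (by linarith) (by linarith) (by linarith) ?_ ?_ ?_
                (le_trans (min_le_left _ _) (by linarith))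
              · rw [hF0, hvr, ← P_two, edist_P1 hs2.le le_rfl]
                congr 1
                rw [abs_sub_comm, abs_of_nonneg (by linarith)]
              · rw [hvr, hv, ← P_two, ← P_top, edist_P2 le_rfl (by linarith) (by linarith) le_rfl]
                congr 1
                rw [abs_sub_comm, abs_of_nonneg (by linarith)]
                ring
              · rw [hF1, hv, ← P_top, edist_P3 le_rfl (by rw [hLL]; linarith) ht3.le htL]
                congr 1
                rw [abs_sub_comm, abs_of_nonneg (by linarith)]
            · -- x on right edge : direct two-term
              refine fin2 t₀ (2 + Real.sqrt 2 - s) (t - (2 + Real.sqrt 2)) ht₀0.le ht₀1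
                (by linarith) (by linarith) ?_ ?_
                (le_trans (min_le_left _ _) (by linarith))
              · rw [hF0, hv, ← P_top, edist_P2 hs2 hs3.le (by linarith) le_rfl]
                congr 1
                rw [abs_sub_comm, abs_of_nonneg (by linarith)]
              · rw [hF1, hv, ← P_top, edist_P3 le_rfl (by rw [hLL]; linarith) ht3.le htL]
                congr 1
                rw [abs_sub_comm, abs_of_nonneg (by linarith)]


lemma abs_to (a b : ℝ) (h : a ≤ b) : |a - b| = b - a := by
  rw [abs_sub_comm, abs_of_nonneg (by linarith)]

lemma netDist_P_le {s t : ℝ} {x y : Tri} (hx : (x:ℂ) = P s) (hy : (y:ℂ) = P t)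
    (h0 : 0 ≤ s) (hst : s ≤ t) (htL : t ≤ LL) :
    netDist x y ≤ ENNReal.ofReal (t - s) := by
  have hsp := s2_pos
  have hLL : LL = 2 + 2 * Real.sqrt 2 := rfl
  by_cases ht2 : t ≤ 2
  · refine le_trans (netDist_le_piece hx hy (Or.inl ⟨h0, by linarith, by linarith, ht2⟩)) ?_
    rw [abs_to s t hst]
  push_neg at ht2
  by_cases ht3 : t ≤ 2 + Real.sqrt 2
  · by_cases hs2 : 2 ≤ s
    · refine le_trans (netDist_le_piece hx hy (Or.inr (Or.inl ⟨hs2, by linarith, ht2.le, ht3⟩))) ?_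
      rw [abs_to s t hst]
    · push_neg at hs2
      -- through vertex 1
      set V : Tri := ⟨P 2, P_mem (by norm_num) (by rw [hLL]; linarith)⟩ with hV
      have hVc : (V:ℂ) = P 2 := rfl
      calc netDist x y ≤ netDist x V + netDist V y := netDist_triangle _ _ _
        _ ≤ ENNReal.ofReal (2 - s) + ENNReal.ofReal (t - 2) := by
            gcongr
            · refine le_trans (netDist_le_piece hx hVc
                (Or.inl ⟨h0, hs2.le, by norm_num, le_rfl⟩)) ?_
              rw [abs_to s 2 hs2.le]
            · refine le_trans (netDist_le_piece hVc hy
                (Or.inr (Or.inl ⟨le_rfl, by linarith, ht2.le, ht3⟩))) ?_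
              rw [abs_to 2 t ht2.le]
        _ = ENNReal.ofReal (t - s) := by
            rw [← ENNReal.ofReal_add (by linarith) (by linarith)]
            congr 1; ring
  · push_neg at ht3
    by_cases hs3 : 2 + Real.sqrt 2 ≤ s
    · refine le_trans (netDist_le_piece hx hy (Or.inr (Or.inr ⟨hs3, by linarith, ht3.le, htL⟩))) ?_
      rw [abs_to s t hst]
    · push_neg at hs3
      set W : Tri := ⟨P (2 + Real.sqrt 2), P_mem (by linarith) (by rw [hLL]; linarith)⟩ with hW
      have hWc : (W:ℂ) = P (2 + Real.sqrt 2) := rfl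
      have hWy : netDist W y ≤ ENNReal.ofReal (t - (2 + Real.sqrt 2)) := by
        refine le_trans (netDist_le_piece hWc hy
          (Or.inr (Or.inr ⟨le_rfl, by rw [hLL]; linarith, ht3.le, htL⟩))) ?_
        rw [abs_to _ t ht3.le]
      by_cases hs2 : 2 ≤ s
      · calc netDist x y ≤ netDist x W + netDist W y := netDist_triangle _ _ _
          _ ≤ ENNReal.ofReal (2 + Real.sqrt 2 - s) + ENNReal.ofReal (t - (2 + Real.sqrt 2)) := by
              gcongr
              refine le_trans (netDist_le_piece hx hWc
                (Or.inr (Or.inl ⟨hs2, hs3.le, by linarith, le_rfl⟩))) ?_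
              rw [abs_to s _ hs3.le]
          _ = ENNReal.ofReal (t - s) := by
              rw [← ENNReal.ofReal_add (by linarith) (by linarith)]
              congr 1; ring
      · push_neg at hs2
        set V : Tri := ⟨P 2, P_mem (by norm_num) (by rw [hLL]; linarith)⟩ with hV
        have hVc : (V:ℂ) = P 2 := rfl
        calc netDist x y ≤ netDist x V + (netDist V W + netDist W y) :=
              le_trans (netDist_triangle x V y) (by
                gcongr
                exact netDist_triangle V W y)
          _ ≤ ENNReal.ofReal (2 - s) + (ENNReal.ofReal (Real.sqrt 2)
                + ENNReal.ofReal (t - (2 + Real.sqrt 2))) := by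
              gcongr
              · refine le_trans (netDist_le_piece hx hVc
                  (Or.inl ⟨h0, hs2.le, by norm_num, le_rfl⟩)) ?_
                rw [abs_to s 2 hs2.le]
              · refine le_trans (netDist_le_piece hVc hWc
                  (Or.inr (Or.inl ⟨le_rfl, by linarith, by linarith, le_rfl⟩))) ?_
                rw [abs_to 2 _ (by linarith)]
                norm_num
          _ = ENNReal.ofReal (t - s) := by
              rw [← ENNReal.ofReal_add (by linarith) (by linarith),
                ← ENNReal.ofReal_add (by linarith) (by linarith)]
              congr 1; ring

lemma netDist_P_le' {s t : ℝ} {x y : Tri} (hx : (x:ℂ) = P s) (hy : (y:ℂ) = P t)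
    (h0 : 0 ≤ s) (hst : s ≤ t) (htL : t ≤ LL) :
    netDist x y ≤ ENNReal.ofReal (s + (LL - t)) := by
  have hLL : LL = 2 + 2 * Real.sqrt 2 := rfl
  have hsp := s2_pos
  set O : Tri := ⟨P 0, P_mem le_rfl (by rw [hLL]; linarith)⟩ with hO
  have hOc : (O:ℂ) = P 0 := rfl
  have hOc' : (O:ℂ) = P LL := by rw [hOc, P_zero, P_LL]
  calc netDist x y ≤ netDist x O + netDist O y := netDist_triangle _ _ _
    _ ≤ ENNReal.ofReal s + ENNReal.ofReal (LL - t) := by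
        gcongr
        · rw [netDist_symm]
          have := netDist_P_le hOc hx le_rfl h0 (by linarith)
          simpa using this
        · rw [netDist_symm]
          have := netDist_P_le hy hOc' (by linarith) htL le_rfl
          exact this
    _ = ENNReal.ofReal (s + (LL - t)) := by
        rw [← ENNReal.ofReal_add h0 (by linarith)]

lemma netDist_P_le_min {s t : ℝ} {x y : Tri} (hx : (x:ℂ) = P s) (hy : (y:ℂ) = P t)
    (h0 : 0 ≤ s) (hst : s ≤ t) (htL : t ≤ LL) :
    netDist x y ≤ ENNReal.ofReal (min (t - s) (s + (LL - t))) := by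
  rcases le_total (t - s) (s + (LL - t)) with h | h
  · rw [min_eq_left h]; exact netDist_P_le hx hy h0 hst htL
  · rw [min_eq_right h]; exact netDist_P_le' hx hy h0 hst htL

/-- the canonical distance -/
lemma netDist_eq {s t : ℝ} {x y : Tri} (hx : (x:ℂ) = P s) (hy : (y:ℂ) = P t)
    (h0 : 0 ≤ s) (hst : s ≤ t) (htL : t ≤ LL) :
    netDist x y = ENNReal.ofReal (min (t - s) (s + (LL - t))) :=
  le_antisymm (netDist_P_le_min hx hy h0 hst htL) (netDist_P_ge hx hy h0 hst htL)


def cd (s t : ℝ) : ℝ := min |s - t| (LL - |s - t|)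

lemma cd_cases (s t : ℝ) :
    (cd s t = s - t ∧ t ≤ s ∧ s - t ≤ LL - (s - t)) ∨
    (cd s t = t - s ∧ s ≤ t ∧ t - s ≤ LL - (t - s)) ∨
    (cd s t = LL - (s - t) ∧ t ≤ s ∧ LL - (s - t) ≤ s - t) ∨
    (cd s t = LL - (t - s) ∧ s ≤ t ∧ LL - (t - s) ≤ t - s) := by
  rcases abs_cases (s - t) with ⟨e, he⟩ | ⟨e, he⟩
  · rcases min_cases (s - t) (LL - (s - t)) with ⟨m, hm⟩ | ⟨m, hm⟩
    · exact Or.inl ⟨by rw [cd, e]; linarith [m], by linarith, by linarith⟩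
    · exact Or.inr (Or.inr (Or.inl ⟨by rw [cd, e]; linarith [m], by linarith, by linarith⟩))
  · rcases min_cases (-(s - t)) (LL - -(s - t)) with ⟨m, hm⟩ | ⟨m, hm⟩
    · exact Or.inr (Or.inl ⟨by rw [cd, e]; linarith [m], by linarith, by linarith⟩)
    · exact Or.inr (Or.inr (Or.inr ⟨by rw [cd, e]; linarith [m], by linarith, by linarith⟩))

lemma circle_sep1 {q1 q2 q3 q4 v : ℝ} (hq0 : 0 ≤ q1) (h12 : q1 < q2) (h23 : q2 < q3)
    (h34 : q3 < q4) (hq4 : q4 ≤ LL) (hwrap : q4 - q1 < LL)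
    (hv0 : 0 ≤ v) (hvL : v ≤ LL)
    (h1 : cd v q1 ≤ cd v q2) (h2 : cd v q1 ≤ cd v q4)
    (h3 : cd v q3 ≤ cd v q2) (h4 : cd v q3 ≤ cd v q4) : False := by
  rcases cd_cases v q1 with ⟨e1, u1, m1⟩ | ⟨e1, u1, m1⟩ | ⟨e1, u1, m1⟩ | ⟨e1, u1, m1⟩ <;>
    rw [e1] at h1 h2 <;>
  rcases cd_cases v q2 with ⟨e2, u2, m2⟩ | ⟨e2, u2, m2⟩ | ⟨e2, u2, m2⟩ | ⟨e2, u2, m2⟩ <;>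
    rw [e2] at h1 h3 <;>
  rcases cd_cases v q3 with ⟨e3, u3, m3⟩ | ⟨e3, u3, m3⟩ | ⟨e3, u3, m3⟩ | ⟨e3, u3, m3⟩ <;>
    rw [e3] at h3 h4 <;>
  rcases cd_cases v q4 with ⟨e4, u4, m4⟩ | ⟨e4, u4, m4⟩ | ⟨e4, u4, m4⟩ | ⟨e4, u4, m4⟩ <;>
    rw [e4] at h2 h4 <;>
  linarith

lemma circle_sep2 {q1 q2 q3 q4 v : ℝ} (hq0 : 0 ≤ q1) (h12 : q1 < q2) (h23 : q2 < q3)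
    (h34 : q3 < q4) (hq4 : q4 ≤ LL) (hwrap : q4 - q1 < LL)
    (hv0 : 0 ≤ v) (hvL : v ≤ LL)
    (h1 : cd v q2 ≤ cd v q1) (h2 : cd v q2 ≤ cd v q3)
    (h3 : cd v q4 ≤ cd v q1) (h4 : cd v q4 ≤ cd v q3) : False := by
  rcases cd_cases v q1 with ⟨e1, u1, m1⟩ | ⟨e1, u1, m1⟩ | ⟨e1, u1, m1⟩ | ⟨e1, u1, m1⟩ <;>
    rw [e1] at h1 h3 <;>
  rcases cd_cases v q2 with ⟨e2, u2, m2⟩ | ⟨e2, u2, m2⟩ | ⟨e2, u2, m2⟩ | ⟨e2, u2, m2⟩ <;>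
    rw [e2] at h1 h2 <;>
  rcases cd_cases v q3 with ⟨e3, u3, m3⟩ | ⟨e3, u3, m3⟩ | ⟨e3, u3, m3⟩ | ⟨e3, u3, m3⟩ <;>
    rw [e3] at h2 h4 <;>
  rcases cd_cases v q4 with ⟨e4, u4, m4⟩ | ⟨e4, u4, m4⟩ | ⟨e4, u4, m4⟩ | ⟨e4, u4, m4⟩ <;>
    rw [e4] at h3 h4 <;>
  linarith

lemma cd_nonneg {s t : ℝ} (hs0 : 0 ≤ s) (hsL : s ≤ LL) (ht0 : 0 ≤ t) (htL : t ≤ LL) :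
    0 ≤ cd s t := by
  rcases abs_cases (s - t) with ⟨e, he⟩ | ⟨e, he⟩ <;> rw [cd, e] <;>
    refine le_min (by linarith) (by linarith)

lemma cd_comm (s t : ℝ) : cd s t = cd t s := by rw [cd, cd, abs_sub_comm]

lemma cd_eval {s t : ℝ} (h : 0 ≤ s - t) (h2 : s - t ≤ LL - (s - t)) : cd s t = s - t := by
  rw [cd, abs_of_nonneg h]
  exact min_eq_left h2

lemma cd_eval' {s t : ℝ} (h : 0 ≤ s - t) (h2 : LL - (s - t) ≤ s - t) : cd s t = LL - (s - t) := by
  rw [cd, abs_of_nonneg h]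
  exact min_eq_right h2

lemma netDist_cd {s t : ℝ} {x y : Tri} (hx : (x:ℂ) = P s) (hy : (y:ℂ) = P t)
    (hs0 : 0 ≤ s) (hsL : s ≤ LL) (ht0 : 0 ≤ t) (htL : t ≤ LL) :
    netDist x y = ENNReal.ofReal (cd s t) := by
  rcases le_total s t with h | h
  · rw [netDist_eq hx hy hs0 h htL]
    congr 1
    rw [cd, abs_to s t h]
    congr 1
    ring
  · rw [netDist_symm, netDist_eq hy hx ht0 h hsL]
    congr 1
    rw [cd, abs_of_nonneg (by linarith)]
    congr 1
    ring

lemma netDist_le_iff {x y x' y' : Tri} {s t s' t' : ℝ}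
    (hx : (x:ℂ) = P s) (hy : (y:ℂ) = P t) (hx' : (x':ℂ) = P s') (hy' : (y':ℂ) = P t')
    (hs0 : 0 ≤ s) (hsL : s ≤ LL) (ht0 : 0 ≤ t) (htL : t ≤ LL)
    (hs0' : 0 ≤ s') (hsL' : s' ≤ LL) (ht0' : 0 ≤ t') (htL' : t' ≤ LL) :
    netDist x y ≤ netDist x' y' ↔ cd s t ≤ cd s' t' := by
  rw [netDist_cd hx hy hs0 hsL ht0 htL, netDist_cd hx' hy' hs0' hsL' ht0' htL']
  exact ENNReal.ofReal_le_ofReal_iff (cd_nonneg hs0' hsL' ht0' htL')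

/-- Voronoi cell with respect to the shortest-path distance on the network. -/
def cellN (x : Finset Tri) (y : Tri) : Set Tri :=
  {ξ | ∀ z ∈ x, netDist ξ y ≤ netDist ξ z}

/-- Delaunay neighbour relation on the network. -/
def DelN (x : Finset Tri) (a b : Tri) : Prop := (cellN x a ∩ cellN x b).Nonempty

/-- `y` is an `x`-clique. -/
def CliqueN (x y : Finset Tri) : Prop := ∀ a ∈ y, ∀ b ∈ y, DelN x a b

/-- There is a three-point configuration `z` on the triangle network, one point in the
interior of each edge, which is a Delaunay clique in itself, but such that for every
additional point `u ∉ z` the set `z` is no longer a clique in `z ∪ {u}` even though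
some point of `z` is not a Delaunay neighbour of `u` in `z ∪ {u}`: the
Baddeley–Møller condition (C1) fails on this network. -/
theorem triangle_C1_fails :
    ∃ z : Finset Tri, z.card = 3 ∧
      (∃ a b c : Tri, z = {a, b, c} ∧
        (a : ℂ) ∈ openSegment ℝ (-1 : ℂ) 1 ∧
        (b : ℂ) ∈ openSegment ℝ (1 : ℂ) Complex.I ∧
        (c : ℂ) ∈ openSegment ℝ (-1 : ℂ) Complex.I) ∧
      CliqueN z z ∧
      ∀ u : Tri, u ∉ z →
        ¬ CliqueN (insert u z) z ∧ ∃ y ∈ z, ¬ DelN (insert u z) y u := by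
  have g1 := s2_gt
  have g2 := s2_lt
  have hLdef : LL = 2 + 2 * Real.sqrt 2 := rfl
  have hL4 : 4 < LL := by rw [hLdef]; linarith
  have hL5 : LL < 5 := by rw [hLdef]; linarith
  -- the three points
  set a : Tri := ⟨P 1, P_mem (by norm_num) (by linarith)⟩ with ha
  set b : Tri := ⟨P 3, P_mem (by norm_num) (by linarith)⟩ with hb
  set c : Tri := ⟨P (LL - 1), P_mem (by linarith) (by linarith)⟩ with hc
  have hA : (a:ℂ) = P 1 := rfl
  have hB : (b:ℂ) = P 3 := rfl
  have hC : (c:ℂ) = P (LL - 1) := rfl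
  have hPa : P 1 = ⟨0, 0⟩ := by rw [P1_def (by norm_num)]; norm_num
  have hPb : P 3 = ⟨1 - 1/Real.sqrt 2, 1/Real.sqrt 2⟩ := by
    rw [P2_def (by norm_num) (by linarith)]
    norm_num
  have hPc : P (LL - 1) = ⟨1/Real.sqrt 2 - 1, 1/Real.sqrt 2⟩ := by
    rw [P3_def (by linarith) (by linarith)]
    have h9 : LL - (LL - 1) = 1 := by ring
    rw [h9]
  have hinv2 : 0 < 1/Real.sqrt 2 := by positivity
  have hinv2' : 1/Real.sqrt 2 < 1 := by rw [div_lt_one (by linarith)]; linarith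
  have hab : a ≠ b := by
    intro h
    have h1 : P 1 = P 3 := congrArg Subtype.val h
    rw [hPa, hPb] at h1
    have h2 := congrArg Complex.im h1
    simp only [mk_im] at h2
    linarith
  have hac : a ≠ c := by
    intro h
    have h1 : P 1 = P (LL - 1) := congrArg Subtype.val h
    rw [hPa, hPc] at h1
    have h2 := congrArg Complex.im h1
    simp only [mk_im] at h2
    linarith
  have hbc : b ≠ c := by
    intro h
    have h1 : P 3 = P (LL - 1) := congrArg Subtype.val h
    rw [hPb, hPc] at h1
    have h2 := congrArg Complex.re h1
    simp only [mk_re] at h2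
    linarith
  refine ⟨{a, b, c}, ?_, ⟨a, b, c, rfl, ?_, ?_, ?_⟩, ?_, ?_⟩
  · rw [Finset.card_insert_of_notMem (by simp [hab, hac]),
      Finset.card_insert_of_notMem (by simp [hbc]), Finset.card_singleton]
  · -- a in open bottom edge
    rw [openSegment_eq_image, hA, hPa]
    refine ⟨1/2, by norm_num, ?_⟩
    apply Complex.ext <;> simp [Complex.smul_re, Complex.smul_im] <;> norm_num
  · rw [openSegment_eq_image, hB, hPb]
    refine ⟨1/Real.sqrt 2, ⟨hinv2, hinv2'⟩, ?_⟩
    apply Complex.ext <;> simp only [Complex.add_re, Complex.add_im, Complex.smul_re,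
      Complex.smul_im, Complex.one_re, Complex.one_im, Complex.I_re, Complex.I_im,
      smul_eq_mul, mk_re, mk_im] <;> ring
  · rw [openSegment_eq_image, hC, hPc]
    refine ⟨1/Real.sqrt 2, ⟨hinv2, hinv2'⟩, ?_⟩
    apply Complex.ext <;> simp only [Complex.add_re, Complex.add_im, Complex.smul_re,
      Complex.smul_im, Complex.neg_re, Complex.neg_im, Complex.one_re, Complex.one_im,
      Complex.I_re, Complex.I_im, smul_eq_mul, mk_re, mk_im] <;> ring
  · -- clique
    -- bounds for coordinates
    have b1 : (0:ℝ) ≤ 1 := by norm_num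
    have b1' : (1:ℝ) ≤ LL := by linarith
    have b3 : (0:ℝ) ≤ 3 := by norm_num
    have b3' : (3:ℝ) ≤ LL := by linarith
    have bc : (0:ℝ) ≤ LL - 1 := by linarith
    have bc' : LL - 1 ≤ LL := by linarith
    -- witnesses
    set V : Tri := ⟨P 2, P_mem (by norm_num) (by linarith)⟩ with hV
    have hVc : (V:ℂ) = P 2 := rfl
    set O : Tri := ⟨P 0, P_mem le_rfl (by linarith)⟩ with hO
    have hOc : (O:ℂ) = P 0 := rfl
    set W : Tri := ⟨P (2 + Real.sqrt 2), P_mem (by linarith) (by linarith)⟩ with hW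
    have hWc : (W:ℂ) = P (2 + Real.sqrt 2) := rfl
    have b2 : (0:ℝ) ≤ 2 := by norm_num
    have b2' : (2:ℝ) ≤ LL := by linarith
    have b0 : (0:ℝ) ≤ 0 := le_rfl
    have b0' : (0:ℝ) ≤ LL := by linarith
    have bw : (0:ℝ) ≤ 2 + Real.sqrt 2 := by linarith
    have bw' : 2 + Real.sqrt 2 ≤ LL := by linarith
    -- cd values
    have c21 : cd 2 1 = 1 := by rw [cd_eval (by norm_num) (by linarith)]; norm_num
    have c23 : cd 2 3 = 1 := by rw [cd_comm, cd_eval (by norm_num) (by linarith)]; norm_num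
    have c2c : cd 2 (LL - 1) = LL - 3 := by
      rw [cd_comm, cd_eval (by linarith) (by linarith)]; ring
    have c01 : cd 0 1 = 1 := by rw [cd_comm, cd_eval (by norm_num) (by linarith)]; norm_num
    have c03 : cd 0 3 = LL - 3 := by
      rw [cd_comm, cd_eval' (by norm_num) (by linarith)]; ring
    have c0c : cd 0 (LL - 1) = 1 := by
      rw [cd_comm, cd_eval' (by linarith) (by linarith)]; ring
    have cw3 : cd (2 + Real.sqrt 2) 3 = Real.sqrt 2 - 1 := by
      rw [cd_eval (by linarith) (by linarith)]; ring
    have cwc : cd (2 + Real.sqrt 2) (LL - 1) = Real.sqrt 2 - 1 := by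
      rw [cd_comm, cd_eval (by linarith) (by linarith), hLdef]; ring
    have cw1 : cd (2 + Real.sqrt 2) 1 = 1 + Real.sqrt 2 := by
      rw [cd_eval (by linarith) (by linarith)]; ring
    have hVa : V ∈ cellN {a, b, c} a := by
      intro w hw
      simp only [Finset.mem_insert, Finset.mem_singleton] at hw
      rcases hw with rfl | rfl | rfl
      · exact le_rfl
      · rw [netDist_le_iff hVc hA hVc hB b2 b2' b1 b1' b2 b2' b3 b3', c21, c23]
      · rw [netDist_le_iff hVc hA hVc hC b2 b2' b1 b1' b2 b2' bc bc', c21, c2c]; linarith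
    have hVb : V ∈ cellN {a, b, c} b := by
      intro w hw
      simp only [Finset.mem_insert, Finset.mem_singleton] at hw
      rcases hw with rfl | rfl | rfl
      · rw [netDist_le_iff hVc hB hVc hA b2 b2' b3 b3' b2 b2' b1 b1', c21, c23]
      · exact le_rfl
      · rw [netDist_le_iff hVc hB hVc hC b2 b2' b3 b3' b2 b2' bc bc', c23, c2c]; linarith
    have hOa : O ∈ cellN {a, b, c} a := by
      intro w hw
      simp only [Finset.mem_insert, Finset.mem_singleton] at hw
      rcases hw with rfl | rfl | rfl
      · exact le_rfl
      · rw [netDist_le_iff hOc hA hOc hB b0 b0' b1 b1' b0 b0' b3 b3', c01, c03]; linarith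
      · rw [netDist_le_iff hOc hA hOc hC b0 b0' b1 b1' b0 b0' bc bc', c01, c0c]
    have hOcc : O ∈ cellN {a, b, c} c := by
      intro w hw
      simp only [Finset.mem_insert, Finset.mem_singleton] at hw
      rcases hw with rfl | rfl | rfl
      · rw [netDist_le_iff hOc hC hOc hA b0 b0' bc bc' b0 b0' b1 b1', c01, c0c]
      · rw [netDist_le_iff hOc hC hOc hB b0 b0' bc bc' b0 b0' b3 b3', c0c, c03]; linarith
      · exact le_rfl
    have hWb : W ∈ cellN {a, b, c} b := by
      intro w hw
      simp only [Finset.mem_insert, Finset.mem_singleton] at hw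
      rcases hw with rfl | rfl | rfl
      · rw [netDist_le_iff hWc hB hWc hA bw bw' b3 b3' bw bw' b1 b1', cw3, cw1]; linarith
      · exact le_rfl
      · rw [netDist_le_iff hWc hB hWc hC bw bw' b3 b3' bw bw' bc bc', cw3, cwc]
    have hWcc : W ∈ cellN {a, b, c} c := by
      intro w hw
      simp only [Finset.mem_insert, Finset.mem_singleton] at hw
      rcases hw with rfl | rfl | rfl
      · rw [netDist_le_iff hWc hC hWc hA bw bw' bc bc' bw bw' b1 b1', cwc, cw1]; linarith
      · rw [netDist_le_iff hWc hC hWc hB bw bw' bc bc' bw bw' b3 b3', cwc, cw3]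
      · exact le_rfl
    have hself : ∀ (p : Tri) (sp : ℝ), (p:ℂ) = P sp → 0 ≤ sp → sp ≤ LL →
        p ∈ cellN {a, b, c} p := by
      intro p sp hp h0 hL w hw
      have : netDist p p = 0 := by
        rw [netDist_cd hp hp h0 hL h0 hL]
        have : cd sp sp = 0 := by rw [cd_eval (by linarith) (by linarith)]; ring
        rw [this, ENNReal.ofReal_zero]
      rw [this]
      exact zero_le
    intro p hp q hq
    simp only [Finset.mem_insert, Finset.mem_singleton] at hp hq
    rcases hp with rfl | rfl | rfl <;> rcases hq with rfl | rfl | rfl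
    · exact ⟨a, hself a 1 hA (by norm_num) (by linarith), hself a 1 hA (by norm_num) (by linarith)⟩
    · exact ⟨V, hVa, hVb⟩
    · exact ⟨O, hOa, hOcc⟩
    · exact ⟨V, hVb, hVa⟩
    · exact ⟨b, hself b 3 hB (by norm_num) (by linarith), hself b 3 hB (by norm_num) (by linarith)⟩
    · exact ⟨W, hWb, hWcc⟩
    · exact ⟨O, hOcc, hOa⟩
    · exact ⟨W, hWcc, hWb⟩
    · exact ⟨c, hself c (LL-1) hC (by linarith) (by linarith),
        hself c (LL-1) hC (by linarith) (by linarith)⟩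
  · -- part 2
    intro u hu
    obtain ⟨w, hw0, hwL, hPw⟩ := P_surj u.2
    have hU : (u:ℂ) = P w := hPw.symm
    simp only [Finset.mem_insert, Finset.mem_singleton] at hu
    push_neg at hu
    obtain ⟨hua, hub, huc⟩ := hu
    have hw1 : w ≠ 1 := by
      intro h; exact hua (Subtype.ext (by rw [hU, h, hA]))
    have hw3 : w ≠ 3 := by
      intro h; exact hub (Subtype.ext (by rw [hU, h, hB]))
    have hwc : w ≠ LL - 1 := by
      intro h; exact huc (Subtype.ext (by rw [hU, h, hC]))
    -- bounds
    have b1 : (0:ℝ) ≤ 1 := by norm_num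
    have b1' : (1:ℝ) ≤ LL := by linarith
    have b3 : (0:ℝ) ≤ 3 := by norm_num
    have b3' : (3:ℝ) ≤ LL := by linarith
    have bcc : (0:ℝ) ≤ LL - 1 := by linarith
    have bcc' : LL - 1 ≤ LL := by linarith
    -- helper to extract the 4 cd-inequalities from a common cell point
    have extract : ∀ (p q : Tri) (pv qv : ℝ), (p:ℂ) = P pv → (q:ℂ) = P qv →
        0 ≤ pv → pv ≤ LL → 0 ≤ qv → qv ≤ LL →
        (∃ ξ, ξ ∈ cellN (insert u {a, b, c}) p ∧ ξ ∈ cellN (insert u {a, b, c}) q) →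
        ∃ v, 0 ≤ v ∧ v ≤ LL ∧
          (∀ (r : Tri) (rv : ℝ), (r:ℂ) = P rv → 0 ≤ rv → rv ≤ LL →
            r ∈ insert u ({a, b, c} : Finset Tri) →
            cd v pv ≤ cd v rv ∧ cd v qv ≤ cd v rv) := by
      intro p q pv qv hpv hqv hp0 hpL hq0 hqL ⟨ξ, hξp, hξq⟩
      obtain ⟨v, hv0, hvL, hPv⟩ := P_surj ξ.2
      have hX : (ξ:ℂ) = P v := hPv.symm
      refine ⟨v, hv0, hvL, fun r rv hrv hr0 hrL hrmem => ?_⟩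
      constructor
      · exact (netDist_le_iff hX hpv hX hrv hv0 hvL hp0 hpL hv0 hvL hr0 hrL).1 (hξp r hrmem)
      · exact (netDist_le_iff hX hqv hX hrv hv0 hvL hq0 hqL hv0 hvL hr0 hrL).1 (hξq r hrmem)
    have hu_mem : u ∈ insert u ({a, b, c} : Finset Tri) := Finset.mem_insert_self _ _
    have ha_mem : a ∈ insert u ({a, b, c} : Finset Tri) := by simp
    have hb_mem : b ∈ insert u ({a, b, c} : Finset Tri) := by simp
    have hc_mem : c ∈ insert u ({a, b, c} : Finset Tri) := by simp
    constructor
    · -- not a clique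
      intro hcl
      rcases lt_trichotomy w 3 with hw3' | h | hw3'
      · rcases lt_trichotomy w 1 with hw1' | h | hw1'
        · -- w < 1 : broken pair (a, c)
          obtain ⟨v, hv0, hvL, hineq⟩ := extract a c 1 (LL-1) hA hC b1 b1' bcc bcc'
            (hcl a (by simp) c (by simp))
          obtain ⟨i1, i2⟩ := hineq u w hU hw0 hwL hu_mem
          obtain ⟨i3, i4⟩ := hineq b 3 hB b3 b3' hb_mem
          exact circle_sep2 (q1 := w) (q2 := 1) (q3 := 3) (q4 := LL - 1)
            hw0 hw1' (by norm_num) (by linarith) (by linarith) (by linarith)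
            hv0 hvL i1 i3 i2 i4
        · exact absurd h hw1
        · -- 1 < w < 3 : broken pair (a, b)
          obtain ⟨v, hv0, hvL, hineq⟩ := extract a b 1 3 hA hB b1 b1' b3 b3'
            (hcl a (by simp) b (by simp))
          obtain ⟨i1, i2⟩ := hineq u w hU hw0 hwL hu_mem
          obtain ⟨i3, i4⟩ := hineq c (LL-1) hC bcc bcc' hc_mem
          exact circle_sep1 (q1 := 1) (q2 := w) (q3 := 3) (q4 := LL - 1)
            (by norm_num) hw1' hw3' (by linarith) (by linarith) (by linarith)
            hv0 hvL i1 i3 i2 i4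
      · exact absurd h hw3
      · rcases lt_trichotomy w (LL - 1) with hwc' | h | hwc'
        · -- 3 < w < LL - 1 : broken pair (b, c)
          obtain ⟨v, hv0, hvL, hineq⟩ := extract b c 3 (LL-1) hB hC b3 b3' bcc bcc'
            (hcl b (by simp) c (by simp))
          obtain ⟨i1, i2⟩ := hineq u w hU hw0 hwL hu_mem
          obtain ⟨i3, i4⟩ := hineq a 1 hA b1 b1' ha_mem
          exact circle_sep2 (q1 := 1) (q2 := 3) (q3 := w) (q4 := LL - 1)
            (by norm_num) (by norm_num) hw3' hwc' (by linarith) (by linarith)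
            hv0 hvL i3 i1 i4 i2
        · exact absurd h hwc
        · -- LL - 1 < w : broken pair (a, c)
          obtain ⟨v, hv0, hvL, hineq⟩ := extract a c 1 (LL-1) hA hC b1 b1' bcc bcc'
            (hcl a (by simp) c (by simp))
          obtain ⟨i1, i2⟩ := hineq u w hU hw0 hwL hu_mem
          obtain ⟨i3, i4⟩ := hineq b 3 hB b3 b3' hb_mem
          exact circle_sep1 (q1 := 1) (q2 := 3) (q3 := LL - 1) (q4 := w)
            (by norm_num) (by norm_num) (by linarith) hwc' hwL (by linarith)
            hv0 hvL i3 i1 i4 i2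
    · -- some point of z is not a neighbour of u
      rcases lt_trichotomy w 3 with hw3' | h | hw3'
      · rcases lt_trichotomy w 1 with hw1' | h | hw1'
        · -- w < 1 : y = b
          refine ⟨b, by simp, ?_⟩
          rintro ⟨ξ, hξb, hξu⟩
          obtain ⟨v, hv0, hvL, hineq⟩ := extract b u 3 w hB hU b3 b3' hw0 hwL ⟨ξ, hξb, hξu⟩
          obtain ⟨i1, i2⟩ := hineq a 1 hA b1 b1' ha_mem
          obtain ⟨i3, i4⟩ := hineq c (LL-1) hC bcc bcc' hc_mem
          exact circle_sep1 (q1 := w) (q2 := 1) (q3 := 3) (q4 := LL - 1)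
            hw0 hw1' (by norm_num) (by linarith) (by linarith) (by linarith)
            hv0 hvL i2 i4 i1 i3
        · exact absurd h hw1
        · -- 1 < w < 3 : y = c
          refine ⟨c, by simp, ?_⟩
          rintro ⟨ξ, hξc, hξu⟩
          obtain ⟨v, hv0, hvL, hineq⟩ := extract c u (LL-1) w hC hU bcc bcc' hw0 hwL ⟨ξ, hξc, hξu⟩
          obtain ⟨i1, i2⟩ := hineq a 1 hA b1 b1' ha_mem
          obtain ⟨i3, i4⟩ := hineq b 3 hB b3 b3' hb_mem
          exact circle_sep2 (q1 := 1) (q2 := w) (q3 := 3) (q4 := LL - 1)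
            (by norm_num) hw1' hw3' (by linarith) (by linarith) (by linarith)
            hv0 hvL i2 i4 i1 i3
      · exact absurd h hw3
      · rcases lt_trichotomy w (LL - 1) with hwc' | h | hwc'
        · -- 3 < w < LL - 1 : y = a
          refine ⟨a, by simp, ?_⟩
          rintro ⟨ξ, hξa, hξu⟩
          obtain ⟨v, hv0, hvL, hineq⟩ := extract a u 1 w hA hU b1 b1' hw0 hwL ⟨ξ, hξa, hξu⟩
          obtain ⟨i1, i2⟩ := hineq b 3 hB b3 b3' hb_mem
          obtain ⟨i3, i4⟩ := hineq c (LL-1) hC bcc bcc' hc_mem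
          exact circle_sep1 (q1 := 1) (q2 := 3) (q3 := w) (q4 := LL - 1)
            (by norm_num) (by norm_num) hw3' hwc' (by linarith) (by linarith)
            hv0 hvL i1 i3 i2 i4
        · exact absurd h hwc
        · -- LL - 1 < w : y = b
          refine ⟨b, by simp, ?_⟩
          rintro ⟨ξ, hξb, hξu⟩
          obtain ⟨v, hv0, hvL, hineq⟩ := extract b u 3 w hB hU b3 b3' hw0 hwL ⟨ξ, hξb, hξu⟩
          obtain ⟨i1, i2⟩ := hineq a 1 hA b1 b1' ha_mem
          obtain ⟨i3, i4⟩ := hineq c (LL-1) hC bcc bcc' hc_mem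
          exact circle_sep2 (q1 := 1) (q2 := 3) (q3 := LL - 1) (q4 := w)
            (by norm_num) (by norm_num) (by linarith) hwc' hwL (by linarith)
            hv0 hvL i1 i3 i2 i4

end
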